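/- arXiv:0901.2098 — 3 statements merged into one kernel-verified Lean document; each statement's English description precedes it below -/
import Mathlib

section
/- Let R be a commutative ring of prime characteristic p with a Frobenius splitting σ : R → R, and let I ⊆ R be an ideal that is compatibly split, i.e., σ(I) ⊆ I. Then I is a radical ideal. -/
/-- A compatibly split ideal under a Frobenius splitting is radical. -/
theorem compatibly_split_ideal_isRadical
    {R : Type*} [CommRing R] (p : ℕ) [Fact p.Prime] [CharP R p]
    (σ : R → R)
    (hadd : ∀ a b : R, σ (a + b) = σ a + σ b)
    (hlin : ∀ a b : R, σ (a ^ p * b) = a * σ b)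
    (hone : σ 1 = 1)
    (I : Ideal R) (hI : ∀ x ∈ I, σ x ∈ I) :
    I.radical = I := by
  -- key step: x^p ∈ I → x ∈ I
  have key : ∀ x : R, x ^ p ∈ I → x ∈ I := by
    intro x hx
    have : σ (x ^ p * 1) = x * σ 1 := hlin x 1
    rw [mul_one, hone, mul_one] at this
    have := hI _ hx
    rwa [‹σ (x ^ p) = x›] at this
  -- iterate: x^(p^k) ∈ I → x ∈ I
  have iter : ∀ k : ℕ, ∀ x : R, x ^ (p ^ k) ∈ I → x ∈ I := by
    intro k
    induction k with
    | zero => intro x hx; simpa using hx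
    | succ k ih =>
      intro x hx
      apply ih
      apply key
      rw [← pow_mul, ← pow_succ]; exact hx
  apply le_antisymm _ Ideal.le_radical
  intro x hx
  obtain ⟨n, hn⟩ := hx
  have hp : 1 < p := (Fact.out : p.Prime).one_lt
  -- choose k with n ≤ p^k
  obtain ⟨k, hk⟩ := pow_unbounded_of_one_lt (n : ℕ) hp
  apply iter k
  rcases Nat.eq_zero_or_pos n with h0 | h0
  · subst h0; simp at hn
    simp [(Ideal.eq_top_iff_one I).2 hn]
  · have : x ^ (p ^ k) = x ^ n * x ^ (p ^ k - n) := by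
      rw [← pow_add, Nat.add_sub_cancel' hk.le]
    rw [this]
    exact I.mul_mem_right _ hn
end

section
/- Let R be a commutative ring of prime characteristic p with a Frobenius splitting σ, and let I be a compatibly split ideal. Then every minimal prime ideal over I is also compatibly split under σ. -/
/-- Every minimal prime over a compatibly split ideal is compatibly split. -/
theorem minimalPrimes_compatibly_split
    {R : Type*} [CommRing R] (p : ℕ) [Fact p.Prime] [CharP R p]
    (σ : R → R)
    (hadd : ∀ a b : R, σ (a + b) = σ a + σ b)
    (hlin : ∀ a b : R, σ (a ^ p * b) = a * σ b)
    (hone : σ 1 = 1)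
    (I : Ideal R) (hI : ∀ x ∈ I, σ x ∈ I) :
    ∀ P ∈ I.minimalPrimes, ∀ x ∈ P, σ x ∈ P := by
  intro P hP x hx
  have hPprime : P.IsPrime := hP.1.1
  have hp1 : 1 < p := (Fact.out : p.Prime).one_lt
  -- σ kills one p-th power of x
  have hfrob : ∀ m : ℕ, σ (x ^ (m * p)) = x ^ m := by
    intro m
    have : x ^ (m * p) = (x ^ m) ^ p * 1 := by ring
    rw [this, hlin, hone, mul_one]
  -- step lemma: saturated membership is stable under σ
  have hstep : ∀ y : R, (∃ s, s ∉ P ∧ s * y ∈ I) → ∃ s, s ∉ P ∧ s * σ y ∈ I := by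
    rintro y ⟨s, hs, hsy⟩
    refine ⟨s, hs, ?_⟩
    have h1 : s ^ p * y ∈ I := by
      have : s ^ p * y = s ^ (p - 1) * (s * y) := by
        rw [← mul_assoc, ← pow_succ, Nat.sub_add_cancel hp1.le]
      rw [this]
      exact Ideal.mul_mem_left _ _ hsy
    have := hI _ h1
    rwa [hlin] at this
  -- Step 1: there exist s ∉ P and n with s * x ^ n ∈ I
  have key : ∃ n : ℕ, ∃ s, s ∉ P ∧ s * x ^ n ∈ I := by
    by_contra h
    push_neg at h
    let T : Submonoid R :=
      { carrier := {y | ∃ s, s ∉ P ∧ ∃ n : ℕ, y = s * x ^ n}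
        mul_mem' := by
          rintro a b ⟨s, hs, n, rfl⟩ ⟨t, ht, m, rfl⟩
          refine ⟨s * t, fun hst => ?_, n + m, by ring⟩
          rcases hPprime.mem_or_mem hst with h' | h' <;> [exact hs h'; exact ht h']
        one_mem' := ⟨1, (Ideal.ne_top_iff_one P).mp hPprime.ne_top, 0, by ring⟩ }
    have hdisj : Disjoint (I : Set R) (T : Set R) := by
      rw [Set.disjoint_left]
      rintro y hy ⟨s, hs, n, rfl⟩
      exact h n s hs hy
    obtain ⟨Q, hQprime, hIQ, hQT⟩ := Ideal.exists_le_prime_disjoint I T hdisj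
    have hQP : Q ≤ P := by
      intro q hq
      by_contra hqP
      exact Set.disjoint_left.mp hQT hq ⟨q, hqP, 0, by ring⟩
    have hxQ : x ∉ Q := fun hxQ =>
      Set.disjoint_left.mp hQT hxQ ⟨1, (Ideal.ne_top_iff_one P).mp hPprime.ne_top, 1, by ring⟩
    exact hxQ (hP.2 ⟨hQprime, hIQ⟩ hQP hx)
  obtain ⟨n, s, hs, hsn⟩ := key
  -- Step 2: descend using σ from x ^ (p ^ e) to x
  have hdesc : ∀ e : ℕ, (∃ s, s ∉ P ∧ s * x ^ (p ^ e) ∈ I) → ∃ s, s ∉ P ∧ s * x ∈ I := by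
    intro e
    induction e with
    | zero => simp only [pow_zero, pow_one]; exact id
    | succ e ih =>
      intro hyp
      apply ih
      have := hstep _ hyp
      rwa [pow_succ, hfrob] at this
  have hlift : ∃ t, t ∉ P ∧ t * x ∈ I := by
    apply hdesc n
    refine ⟨s, hs, ?_⟩
    have hle : n ≤ p ^ n := (Nat.lt_pow_self hp1 : n < p ^ n).le
    have : s * x ^ (p ^ n) = (s * x ^ n) * x ^ (p ^ n - n) := by
      rw [mul_assoc, ← pow_add, Nat.add_sub_cancel' hle]
    rw [this]
    exact Ideal.mul_mem_right _ _ hsn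
  obtain ⟨t, ht, htx⟩ := hlift
  have h1 : t ^ p * x ∈ I := by
    have : t ^ p * x = t ^ (p - 1) * (t * x) := by
      rw [← mul_assoc, ← pow_succ, Nat.sub_add_cancel hp1.le]
    rw [this]; exact Ideal.mul_mem_left _ _ htx
  have h2 : t * σ x ∈ P := hP.1.2 (by rw [← hlin]; exact hI _ h1)
  rcases hPprime.mem_or_mem h2 with h' | h'
  · exact absurd h' ht
  · exact h'
end

section
/- Let k be a field of characteristic p > 0, let R = k[[t_1, …, t_n]] (or R = k[t_1, …, t_n]), and let σ : R → R be a Frobenius splitting such that σ((t_1 ⋯ t_n)^{p-1}) is a unit in R. Then σ does not preserve the ideal ⟨t_{m+1}, …, t_n⟩ for any m < n; that is, there exists an element f of this ideal with σ(f) ∉ ⟨t_{m+1}, …, t_n⟩. -/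
open MvPolynomial

/-- If a Frobenius splitting `σ` of `k[t_1,…,t_n]` is such that `σ((t_1⋯t_n)^(p-1))` is a
unit, then `σ` does not preserve the ideal generated by the last `n - m` variables
(for any `m < n`). -/
theorem splitting_not_compatible_of_isUnit
    {k : Type*} [Field k] (p : ℕ) [Fact p.Prime] [CharP k p]
    (n m : ℕ) (hm : m < n)
    (σ : MvPolynomial (Fin n) k → MvPolynomial (Fin n) k)
    (hadd : ∀ a b, σ (a + b) = σ a + σ b)
    (hlin : ∀ a b, σ (a ^ p * b) = a * σ b)
    (hone : σ 1 = 1)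
    (hunit : IsUnit (σ ((∏ i : Fin n, X i) ^ (p - 1)))) :
    ∃ f ∈ Ideal.span {g : MvPolynomial (Fin n) k | ∃ i : Fin n, m ≤ (i : ℕ) ∧ g = X i},
      σ f ∉ Ideal.span {g : MvPolynomial (Fin n) k | ∃ i : Fin n, m ≤ (i : ℕ) ∧ g = X i} := by
  set I := Ideal.span {g : MvPolynomial (Fin n) k | ∃ i : Fin n, m ≤ (i : ℕ) ∧ g = X i} with hI
  refine ⟨(∏ i : Fin n, X i) ^ (p - 1), ?_, ?_⟩
  · -- the product of all variables is in I, hence so is its (p-1)-st power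
    have hXm : (X (⟨m, hm⟩ : Fin n) : MvPolynomial (Fin n) k) ∈ I :=
      Ideal.subset_span ⟨⟨m, hm⟩, le_refl m, rfl⟩
    have hprod : (∏ i : Fin n, X i : MvPolynomial (Fin n) k) ∈ I := by
      rw [← Finset.mul_prod_erase Finset.univ _ (Finset.mem_univ (⟨m, hm⟩ : Fin n))]
      exact I.mul_mem_right _ hXm
    have hp1 : 0 < p - 1 := Nat.sub_pos_of_lt (Fact.out : p.Prime).one_lt
    exact Ideal.pow_mem_of_mem I hprod _ hp1
  · -- a unit cannot lie in the proper ideal I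
    intro hmem
    have htop : I = ⊤ := I.eq_top_of_isUnit_mem hmem hunit
    -- evaluate all variables at 0
    have hker : I ≤ RingHom.ker (aeval (fun _ : Fin n => (0 : k))).toRingHom := by
      rw [hI, Ideal.span_le]
      rintro g ⟨i, -, rfl⟩
      simp [RingHom.mem_ker]
    have : (1 : MvPolynomial (Fin n) k) ∈ I := htop ▸ Submodule.mem_top
    have h1 := hker this
    simp [RingHom.mem_ker] at h1
end
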